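/- Craig interpolation for propositional logic: if A and B are propositional formulas with A ∧ B unsatisfiable, then there exists a formula I using only variables occurring in both A and B such that A ⊨ I and I ∧ B is unsatisfiable. -/
import Mathlib


/-- Propositional variables. -/
abbrev Var := ℕ
/-- A total truth assignment. -/
abbrev Assignment := Var → Bool

/-- Propositional formulas. -/
inductive PForm
  | var (v : Var)
  | tru
  | fls
  | neg (p : PForm)
  | conj (p q : PForm)
  | disj (p q : PForm)
deriving DecidableEq

/-- Evaluation of a formula under an assignment. -/
def evalP (σ : Assignment) : PForm → Bool
  | .var v => σ v
  | .tru => true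
  | .fls => false
  | .neg p => !evalP σ p
  | .conj p q => evalP σ p && evalP σ q
  | .disj p q => evalP σ p || evalP σ q

/-- The variables syntactically occurring in a formula. -/
def PForm.vars : PForm → Finset Var
  | .var v => {v}
  | .tru => ∅
  | .fls => ∅
  | .neg p => p.vars
  | .conj p q => p.vars ∪ q.vars
  | .disj p q => p.vars ∪ q.vars

/-- Semantic entailment between formulas. -/
def entailsP (A B : PForm) : Prop := ∀ σ : Assignment, evalP σ A = true → evalP σ B = true
/-- Substituting a constant for a variable. -/
def substP (v : Var) (b : Bool) : PForm → PForm
  | .var w => if w = v then (if b then .tru else .fls) else .var w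
  | .tru => .tru
  | .fls => .fls
  | .neg p => .neg (substP v b p)
  | .conj p q => .conj (substP v b p) (substP v b q)
  | .disj p q => .disj (substP v b p) (substP v b q)

lemma evalP_substP (σ : Assignment) (v : Var) (b : Bool) (p : PForm) :
    evalP σ (substP v b p) = evalP (Function.update σ v b) p := by
  induction p with
  | var w =>
    by_cases hw : w = v
    · subst hw; simp [substP, evalP, Function.update_self]
      cases b <;> simp [evalP]
    · simp [substP, hw, evalP, Function.update_of_ne hw]
  | tru => rfl
  | fls => rfl
  | neg p ih => simp [substP, evalP, ih]
  | conj p q ihp ihq => simp [substP, evalP, ihp, ihq]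
  | disj p q ihp ihq => simp [substP, evalP, ihp, ihq]

lemma vars_substP (v : Var) (b : Bool) (p : PForm) :
    (substP v b p).vars ⊆ p.vars \ {v} := by
  induction p with
  | var w =>
    by_cases hw : w = v
    · subst hw; cases b <;> simp [substP, PForm.vars]
    · simp [substP, hw, PForm.vars]
  | tru => simp [substP, PForm.vars]
  | fls => simp [substP, PForm.vars]
  | neg p ih => exact ih
  | conj p q ihp ihq =>
    simp only [substP, PForm.vars]
    intro x hx
    rcases Finset.mem_union.mp hx with h | h
    · have := ihp h; simp [PForm.vars] at this ⊢; tauto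
    · have := ihq h; simp [PForm.vars] at this ⊢; tauto
  | disj p q ihp ihq =>
    simp only [substP, PForm.vars]
    intro x hx
    rcases Finset.mem_union.mp hx with h | h
    · have := ihp h; simp [PForm.vars] at this ⊢; tauto
    · have := ihq h; simp [PForm.vars] at this ⊢; tauto

/-- Existential quantification over a variable. -/
def elimV (v : Var) (p : PForm) : PForm := .disj (substP v true p) (substP v false p)

def elimL : List Var → PForm → PForm
  | [], p => p
  | v :: l, p => elimL l (elimV v p)

lemma vars_elimV (v : Var) (p : PForm) : (elimV v p).vars ⊆ p.vars \ {v} := by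
  simp only [elimV, PForm.vars]
  intro x hx
  rcases Finset.mem_union.mp hx with h | h
  · exact vars_substP v true p h
  · exact vars_substP v false p h

lemma vars_elimL (l : List Var) (p : PForm) :
    (elimL l p).vars ⊆ p.vars \ l.toFinset := by
  induction l generalizing p with
  | nil => simp [elimL]
  | cons v l ih =>
    intro x hx
    have h1 := ih (elimV v p) hx
    simp at h1
    have h2 := vars_elimV v p h1.1
    simp at h2
    simp [h2.1, h2.2, h1.2]

lemma entails_elimV (v : Var) (p : PForm) : entailsP p (elimV v p) := by
  intro σ hσ
  simp only [elimV, evalP, evalP_substP, Bool.or_eq_true]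
  cases hb : σ v with
  | true => left; rw [show Function.update σ v true = σ from by
      funext w; by_cases hw : w = v
      · subst hw; simp [hb]
      · simp [Function.update_of_ne hw]]; exact hσ
  | false => right; rw [show Function.update σ v false = σ from by
      funext w; by_cases hw : w = v
      · subst hw; simp [hb]
      · simp [Function.update_of_ne hw]]; exact hσ

lemma entails_elimL (l : List Var) (p : PForm) : entailsP p (elimL l p) := by
  induction l generalizing p with
  | nil => intro σ hσ; exact hσ
  | cons v l ih => intro σ hσ; exact ih (elimV v p) σ (entails_elimV v p σ hσ)

lemma elimL_sound (l : List Var) (p : PForm) (σ : Assignment)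
    (hσ : evalP σ (elimL l p) = true) :
    ∃ σ' : Assignment, (∀ w, w ∉ l → σ' w = σ w) ∧ evalP σ' p = true := by
  induction l generalizing p σ with
  | nil => exact ⟨σ, fun w _ => rfl, hσ⟩
  | cons v l ih =>
    obtain ⟨σ', hagree, hev⟩ := ih (elimV v p) σ hσ
    simp only [elimV, evalP, evalP_substP, Bool.or_eq_true] at hev
    rcases hev with hev | hev
    · refine ⟨Function.update σ' v true, ?_, hev⟩
      intro w hw
      simp at hw
      rw [Function.update_of_ne hw.1]
      exact hagree w hw.2
    · refine ⟨Function.update σ' v false, ?_, hev⟩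
      intro w hw
      simp at hw
      rw [Function.update_of_ne hw.1]
      exact hagree w hw.2

lemma evalP_congr (σ σ' : Assignment) (p : PForm)
    (h : ∀ v ∈ p.vars, σ v = σ' v) : evalP σ p = evalP σ' p := by
  induction p with
  | var w => exact h w (by simp [PForm.vars])
  | tru => rfl
  | fls => rfl
  | neg p ih => simp [evalP, ih (fun v hv => h v hv)]
  | conj p q ihp ihq =>
    simp [evalP, ihp (fun v hv => h v (by simp [PForm.vars]; tauto)),
      ihq (fun v hv => h v (by simp [PForm.vars]; tauto))]
  | disj p q ihp ihq =>
    simp [evalP, ihp (fun v hv => h v (by simp [PForm.vars]; tauto)),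
      ihq (fun v hv => h v (by simp [PForm.vars]; tauto))]

/-- Craig interpolation for propositional logic: if `A ∧ B` is
unsatisfiable, there exists a formula `I` over the variables common to `A` and
`B` with `A ⊨ I` and `I ∧ B` unsatisfiable. -/
theorem craig_interpolation (A B : PForm)
    (h : ¬ ∃ σ : Assignment, evalP σ A = true ∧ evalP σ B = true) :
    ∃ I : PForm, I.vars ⊆ A.vars ∩ B.vars ∧ entailsP A I ∧
      ¬ ∃ σ : Assignment, evalP σ I = true ∧ evalP σ B = true := by
  set l := (A.vars \ B.vars).toList with hl
  refine ⟨elimL l A, ?_, entails_elimL l A, ?_⟩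
  · intro x hx
    have h1 := vars_elimL l A hx
    simp [hl] at h1
    simp [Finset.mem_inter]
    exact h1
  · rintro ⟨σ, hI, hB⟩
    obtain ⟨σ', hagree, hA⟩ := elimL_sound l A σ hI
    apply h
    refine ⟨σ', hA, ?_⟩
    rw [evalP_congr σ' σ B ?_]
    · exact hB
    · intro v hv
      apply hagree
      simp [hl]
      intro _
      exact hv
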